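/- arXiv:math-ph/0210010 — 3 statements merged into one kernel-verified Lean document; each statement's English description precedes it below -/
import Mathlib

section
/- Let μ be a finite measure on ℝ with all moments finite, and let (π_k) be the monic orthogonal polynomials with respect to μ, with ∫ π_k π_m dμ = c_k² δ_{km}, c_k > 0. For ε ∈ ℂ \ ℝ define the Cauchy transform h_k(ε) = (1/(2πi)) ∫ π_k(x)/(x - ε) dμ(x). Then for every n ≥ 1 and every z ∈ ℂ \ ℝ, the determinant of the 2×2 matrix [[π_n(z), h_n(z)], [γ_{n-1} π_{n-1}(z), γ_{n-1} h_{n-1}(z)]] equals 1, where γ_{n-1} = -2πi/c_{n-1}². -/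
open MeasureTheory Polynomial Complex

-- integrability of complex polynomial evaluations
lemma intC (μ : Measure ℝ) [IsFiniteMeasure μ]
    (hmom : ∀ n : ℕ, Integrable (fun x => |x| ^ n) μ) (S : Polynomial ℂ) :
    Integrable (fun x : ℝ => S.eval (x : ℂ)) μ := by
  have hpow : ∀ j : ℕ, Integrable (fun x : ℝ => ((x : ℂ)) ^ j) μ := by
    intro j
    refine (hmom j).mono' ?_ ?_
    · exact (Complex.continuous_ofReal.pow j).aestronglyMeasurable
    · filter_upwards with x
      simp [Real.norm_eq_abs, abs_pow]
  have : (fun x : ℝ => S.eval (x : ℂ)) =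
      fun x : ℝ => ∑ j ∈ Finset.range (S.natDegree + 1), S.coeff j * (x : ℂ) ^ j := by
    funext x; exact eval_eq_sum_range _
  rw [this]
  exact integrable_finset_sum _ fun j _ => (hpow j).const_mul _

lemma evalA (P : Polynomial ℝ) (x : ℝ) :
    (P.map (algebraMap ℝ ℂ)).eval (x : ℂ) = ((P.eval x : ℝ) : ℂ) := by
  rw [eval_map]
  exact Polynomial.eval₂_at_apply _ x

-- monic map facts
example (P : Polynomial ℝ) (hP : P.Monic) : (P.map (algebraMap ℝ ℂ)).Monic :=
  hP.map _
example (P : Polynomial ℝ) : (P.map (algebraMap ℝ ℂ)).natDegree = P.natDegree :=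
  P.natDegree_map_eq_of_injective (algebraMap ℝ ℂ).injective

lemma orthC (μ : Measure ℝ) [IsFiniteMeasure μ] (p : ℕ → Polynomial ℝ) (c : ℕ → ℝ)
    (horth : ∀ k m, ∫ x, (p k).eval x * (p m).eval x ∂μ =
      if k = m then (c k) ^ 2 else 0) (k m : ℕ) :
    ∫ x : ℝ, ((p k).map (algebraMap ℝ ℂ)).eval (x : ℂ) *
      ((p m).map (algebraMap ℝ ℂ)).eval (x : ℂ) ∂μ =
      ((if k = m then (c k) ^ 2 else 0 : ℝ) : ℂ) := by
  have : (fun x : ℝ => ((p k).map (algebraMap ℝ ℂ)).eval (x : ℂ) *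
      ((p m).map (algebraMap ℝ ℂ)).eval (x : ℂ)) =
      fun x : ℝ => (((p k).eval x * (p m).eval x : ℝ) : ℂ) := by
    funext x; rw [evalA, evalA]; push_cast; ring
  rw [this]
  exact (integral_ofReal (f := fun x => (p k).eval x * (p m).eval x)).trans (by rw [horth]; rfl)

lemma divfacts (P : Polynomial ℂ) (z : ℂ) (hP : P.Monic) {k : ℕ} (hk : 1 ≤ k)
    (hdegP : P.natDegree = k) :
    (P /ₘ (X - Polynomial.C z)).Monic ∧ (P /ₘ (X - Polynomial.C z)).natDegree = k - 1 := by
  have hmX : (X - Polynomial.C z).Monic := monic_X_sub_C z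
  have hdq : (P /ₘ (X - Polynomial.C z)).natDegree = k - 1 := by
    rw [Polynomial.natDegree_divByMonic P hmX, hdegP, natDegree_X_sub_C]
  refine ⟨?_, hdq⟩
  have hdeg0 : P.degree ≠ 0 := by
    rw [Polynomial.degree_eq_natDegree hP.ne_zero, hdegP]
    exact_mod_cast by omega
  have := Polynomial.leadingCoeff_divByMonic_X_sub_C P hdeg0 z
  unfold Polynomial.Monic
  rw [this, hP]

lemma div_eval (P : Polynomial ℂ) (z w : ℂ) :
    P.eval w = (w - z) * (P /ₘ (X - Polynomial.C z)).eval w + P.eval z := by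
  conv_lhs => rw [← Polynomial.modByMonic_add_div P (X - Polynomial.C z)]
  rw [Polynomial.modByMonic_X_sub_C_eq_C_eval]
  simp only [Polynomial.eval_add, Polynomial.eval_mul, Polynomial.eval_sub, Polynomial.eval_X,
    Polynomial.eval_C]
  ring


lemma orth_lt (μ : Measure ℝ) [IsFiniteMeasure μ]
    (hmom : ∀ n : ℕ, Integrable (fun x => |x| ^ n) μ)
    (p : ℕ → Polynomial ℝ) (c : ℕ → ℝ)
    (hmonic : ∀ k, (p k).Monic) (hdeg : ∀ k, (p k).natDegree = k)
    (horth : ∀ k m, ∫ x, (p k).eval x * (p m).eval x ∂μ =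
      if k = m then (c k) ^ 2 else 0) :
    ∀ (d k : ℕ), d < k → ∀ S : Polynomial ℂ, S.natDegree ≤ d →
      ∫ x : ℝ, ((p k).map (algebraMap ℝ ℂ)).eval (x : ℂ) * S.eval (x : ℂ) ∂μ = 0 := by
  intro d
  induction d using Nat.strong_induction_on with
  | _ d ih =>
    intro k hdk S hSd
    by_cases hS0 : S = 0
    · simp [hS0]
    set d' := S.natDegree with hd'
    set T : Polynomial ℂ := S - Polynomial.C (S.coeff d') * ((p d').map (algebraMap ℝ ℂ))
      with hT
    have hAmonic : ∀ j, ((p j).map (algebraMap ℝ ℂ)).Monic := fun j => (hmonic j).map _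
    have hAdeg : ∀ j, ((p j).map (algebraMap ℝ ℂ)).natDegree = j := fun j => by
      rw [(p j).natDegree_map_eq_of_injective (algebraMap ℝ ℂ).injective, hdeg]
    have hTdeg : (T.natDegree ≤ d' - 1 ∧ d' ≠ 0) ∨ T = 0 := by
      by_cases hd0 : d' = 0
      · right
        have hS : S = Polynomial.C (S.coeff d') := by
          rw [hd0]; exact Polynomial.eq_C_of_natDegree_eq_zero hd0
        have hA0 : (p d').map (algebraMap ℝ ℂ) = 1 := by
          rw [hd0]; exact ((hAmonic 0).natDegree_eq_zero).mp (hAdeg 0)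
        rw [hT, hA0, mul_one, ← hS, sub_self]
      · left
        refine ⟨?_, hd0⟩
        rw [Polynomial.natDegree_le_iff_coeff_eq_zero]
        intro N hN
        have hN' : d' ≤ N := by omega
        rw [hT]
        simp only [Polynomial.coeff_sub, Polynomial.coeff_C_mul]
        rcases eq_or_lt_of_le hN' with hEq | hLt
        · rw [← hEq]
          have h1 : ((p d').map (algebraMap ℝ ℂ)).coeff d' = 1 := by
            have := (hAmonic d').coeff_natDegree
            rwa [hAdeg] at this
          rw [h1, mul_one, sub_self]
        · have e1 : ((p d').map (algebraMap ℝ ℂ)).coeff N = 0 :=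
            Polynomial.coeff_eq_zero_of_natDegree_lt (by rw [hAdeg]; exact hLt)
          have e2 : S.coeff N = 0 := Polynomial.coeff_eq_zero_of_natDegree_lt hLt
          rw [e1, e2, mul_zero, sub_zero]
    have hsplit : (fun x : ℝ => ((p k).map (algebraMap ℝ ℂ)).eval (x : ℂ) * S.eval (x : ℂ)) =
        fun x : ℝ => S.coeff d' * (((p k).map (algebraMap ℝ ℂ)).eval (x : ℂ) *
          ((p d').map (algebraMap ℝ ℂ)).eval (x : ℂ)) +
          ((p k).map (algebraMap ℝ ℂ)).eval (x : ℂ) * T.eval (x : ℂ) := by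
      funext x
      rw [hT]
      simp only [Polynomial.eval_sub, Polynomial.eval_mul, Polynomial.eval_C]
      ring
    have hint1 : Integrable (fun x : ℝ => ((p k).map (algebraMap ℝ ℂ)).eval (x : ℂ) *
        ((p d').map (algebraMap ℝ ℂ)).eval (x : ℂ)) μ := by
      simpa [Polynomial.eval_mul] using
        intC μ hmom ((p k).map (algebraMap ℝ ℂ) * (p d').map (algebraMap ℝ ℂ))
    have hint2 : Integrable (fun x : ℝ => ((p k).map (algebraMap ℝ ℂ)).eval (x : ℂ) *
        T.eval (x : ℂ)) μ := by
      simpa [Polynomial.eval_mul] using intC μ hmom ((p k).map (algebraMap ℝ ℂ) * T)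
    rw [hsplit, integral_add (hint1.const_mul _) hint2, integral_const_mul,
      orthC μ p c horth k d']
    have hkd' : k ≠ d' := by omega
    rw [if_neg hkd']
    have hT0 : ∫ x : ℝ, ((p k).map (algebraMap ℝ ℂ)).eval (x : ℂ) * T.eval (x : ℂ) ∂μ = 0 := by
      rcases hTdeg with ⟨hTd, hd0⟩ | hT0
      · have hd0' : d' ≠ 0 := hd0
        exact ih (d' - 1) (by omega) k (by omega) T hTd
      · simp [hT0]
    rw [hT0]
    simp

lemma sub_deg (P Q : Polynomial ℂ) (hP : P.Monic) (hQ : Q.Monic) (d : ℕ)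
    (hPd : P.natDegree = d) (hQd : Q.natDegree = d) :
    (P - Q).natDegree ≤ d - 1 ∨ P - Q = 0 := by
  rcases Nat.eq_zero_or_pos d with hd | hd
  · right
    rw [hP.natDegree_eq_zero.mp (hPd.trans hd),
      hQ.natDegree_eq_zero.mp (hQd.trans hd), sub_self]
  · left
    rw [Polynomial.natDegree_le_iff_coeff_eq_zero]
    intro N hN
    have hN' : d ≤ N := by omega
    rw [Polynomial.coeff_sub]
    rcases eq_or_lt_of_le hN' with hEq | hLt
    · have h1 : P.coeff N = 1 := by
        rw [← hEq, ← hPd]; exact hP.coeff_natDegree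
      have h2 : Q.coeff N = 1 := by
        rw [← hEq, ← hQd]; exact hQ.coeff_natDegree
      rw [h1, h2, sub_self]
    · rw [Polynomial.coeff_eq_zero_of_natDegree_lt (hPd ▸ hLt),
        Polynomial.coeff_eq_zero_of_natDegree_lt (hQd ▸ hLt), sub_self]

theorem fokas_its_kitaev_det_eq_one
    (μ : Measure ℝ) [IsFiniteMeasure μ]
    (hmom : ∀ n : ℕ, Integrable (fun x => |x| ^ n) μ)
    (p : ℕ → Polynomial ℝ) (c : ℕ → ℝ)
    (hmonic : ∀ k, (p k).Monic) (hdeg : ∀ k, (p k).natDegree = k)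
    (hc : ∀ k, 0 < c k)
    (horth : ∀ k m, ∫ x, (p k).eval x * (p m).eval x ∂μ =
      if k = m then (c k) ^ 2 else 0)
    (h : ℕ → ℂ → ℂ)
    (hdef : ∀ (k : ℕ) (ε : ℂ), ε.im ≠ 0 →
      h k ε = (1 / (2 * Real.pi * I)) *
        ∫ x, (((p k).eval x : ℝ) : ℂ) / ((x : ℂ) - ε) ∂μ)
    (n : ℕ) (hn : 1 ≤ n) (z : ℂ) (hz : z.im ≠ 0) :
    Matrix.det
      !![((p n).eval₂ (algebraMap ℝ ℂ) z), h n z;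
         (-2 * Real.pi * I / (c (n-1)) ^ 2) * ((p (n-1)).eval₂ (algebraMap ℝ ℂ) z),
         (-2 * Real.pi * I / (c (n-1)) ^ 2) * h (n-1) z] = 1 := by
  set A : ℕ → Polynomial ℂ := fun k => (p k).map (algebraMap ℝ ℂ) with hA
  have hAmonic : ∀ j, (A j).Monic := fun j => (hmonic j).map _
  have hAdeg : ∀ j, (A j).natDegree = j := fun j => by
    rw [hA]
    rw [(p j).natDegree_map_eq_of_injective (algebraMap ℝ ℂ).injective, hdeg]
  have hden : ∀ x : ℝ, (x : ℂ) - z ≠ 0 := by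
    intro x
    rw [sub_ne_zero]
    intro hxz
    apply hz
    rw [← hxz]
    simp
  set q1 : Polynomial ℂ := A n /ₘ (X - Polynomial.C z) with hq1
  set q0 : Polynomial ℂ := A (n-1) /ₘ (X - Polynomial.C z) with hq0
  obtain ⟨hq1m, hq1d⟩ := divfacts (A n) z (hAmonic n) hn (hAdeg n)
  have hq0d : q0.natDegree = (n-1) - 1 := by
    rw [hq0, Polynomial.natDegree_divByMonic _ (monic_X_sub_C z), hAdeg, natDegree_X_sub_C]
  -- integrability of Cauchy kernels
  have hfk : ∀ k, Integrable (fun x : ℝ => (A k).eval (x : ℂ) / ((x : ℂ) - z)) μ := by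
    intro k
    have hcont : Continuous fun x : ℝ => (A k).eval (x : ℂ) / ((x : ℂ) - z) := by
      apply Continuous.div
      · exact (A k).continuous.comp Complex.continuous_ofReal
      · exact Complex.continuous_ofReal.sub continuous_const
      · exact hden
    refine Integrable.mono' (((intC μ hmom (A k)).norm).mul_const |z.im|⁻¹)
      hcont.aestronglyMeasurable ?_
    filter_upwards with x
    rw [norm_div]
    have him : |z.im| ≤ ‖(x : ℂ) - z‖ := by
      have := Complex.abs_im_le_norm ((x : ℂ) - z)
      simpa using this
    have hzim : (0 : ℝ) < |z.im| := abs_pos.mpr hz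
    calc ‖(A k).eval (x : ℂ)‖ / ‖(x : ℂ) - z‖
        ≤ ‖(A k).eval (x : ℂ)‖ / |z.im| :=
          div_le_div_of_nonneg_left (norm_nonneg _) hzim him
      _ = ‖(A k).eval (x : ℂ)‖ * |z.im|⁻¹ := div_eq_mul_inv _ _
  -- rewrite h in terms of A
  have hh : ∀ k, h k z = (1 / (2 * Real.pi * I)) *
      ∫ x : ℝ, (A k).eval (x : ℂ) / ((x : ℂ) - z) ∂μ := by
    intro k
    rw [hdef k z hz]
    congr 1
    refine integral_congr_ae (Filter.Eventually.of_forall fun x => ?_)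
    simp only [hA]
    rw [evalA]
  -- the two orthogonality integrals
  have I1 : ∫ x : ℝ, (A n).eval (x : ℂ) * q0.eval (x : ℂ) ∂μ = 0 := by
    exact orth_lt μ hmom p c hmonic hdeg horth (n-1) n (by omega) q0 (by omega)
  have I2 : ∫ x : ℝ, (A (n-1)).eval (x : ℂ) * q1.eval (x : ℂ) ∂μ = ((c (n-1))^2 : ℝ) := by
    set T : Polynomial ℂ := q1 - A (n-1) with hT
    have hsplit : (fun x : ℝ => (A (n-1)).eval (x : ℂ) * q1.eval (x : ℂ)) =
        fun x : ℝ => (A (n-1)).eval (x : ℂ) * (A (n-1)).eval (x : ℂ) +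
          (A (n-1)).eval (x : ℂ) * T.eval (x : ℂ) := by
      funext x
      rw [hT]
      simp only [Polynomial.eval_sub]
      ring
    have hint1 : Integrable (fun x : ℝ => (A (n-1)).eval (x : ℂ) * (A (n-1)).eval (x : ℂ)) μ := by
      simpa [Polynomial.eval_mul] using intC μ hmom (A (n-1) * A (n-1))
    have hint2 : Integrable (fun x : ℝ => (A (n-1)).eval (x : ℂ) * T.eval (x : ℂ)) μ := by
      simpa [Polynomial.eval_mul] using intC μ hmom (A (n-1) * T)
    have hTint : ∫ x : ℝ, (A (n-1)).eval (x : ℂ) * T.eval (x : ℂ) ∂μ = 0 := by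
      rcases sub_deg q1 (A (n-1)) hq1m (hAmonic (n-1)) (n-1) hq1d (hAdeg (n-1)) with hTd | hT0
      · rcases Nat.eq_zero_or_pos (n-1) with h0 | hpos
        · have hq1one : q1 = 1 := hq1m.natDegree_eq_zero.mp (hq1d.trans h0)
          have hA1 : A (n-1) = 1 :=
            (hAmonic (n-1)).natDegree_eq_zero.mp ((hAdeg (n-1)).trans h0)
          have hT00 : T = 0 := by rw [hT, hq1one, hA1, sub_self]
          simp [hT00]
        · exact orth_lt μ hmom p c hmonic hdeg horth ((n-1)-1) (n-1) (by omega) T hTd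
      · simp [hT ▸ hT0]
    rw [hsplit, integral_add hint1 hint2, hTint, add_zero]
    have := orthC μ p c horth (n-1) (n-1)
    rw [if_pos rfl] at this
    exact this
  -- pointwise algebraic identity
  have hpt : ∀ x : ℝ,
      (A n).eval z * ((A (n-1)).eval (x : ℂ) / ((x : ℂ) - z)) -
        (A (n-1)).eval z * ((A n).eval (x : ℂ) / ((x : ℂ) - z)) =
      (A n).eval (x : ℂ) * q0.eval (x : ℂ) - (A (n-1)).eval (x : ℂ) * q1.eval (x : ℂ) := by
    intro x
    have e1 := div_eval (A n) z (x : ℂ)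
    have e2 := div_eval (A (n-1)) z (x : ℂ)
    rw [← hq1] at e1
    rw [← hq0] at e2
    have hxz := hden x
    have hstep : (A n).eval z * ((A (n-1)).eval (x : ℂ) / ((x : ℂ) - z)) -
        (A (n-1)).eval z * ((A n).eval (x : ℂ) / ((x : ℂ) - z)) =
        ((A n).eval z * (A (n-1)).eval (x : ℂ) -
          (A (n-1)).eval z * (A n).eval (x : ℂ)) / ((x : ℂ) - z) := by ring
    rw [hstep, e1, e2, div_eq_iff hxz]
    ring
  -- assemble
  have hcn : ((c (n-1) : ℂ)) ≠ 0 := by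
    exact_mod_cast (hc (n-1)).ne'
  have hπ : ((Real.pi : ℂ)) ≠ 0 := by
    exact_mod_cast Real.pi_ne_zero
  have heval₂ : ∀ k, (p k).eval₂ (algebraMap ℝ ℂ) z = (A k).eval z := fun k =>
    (Polynomial.eval_map _ _).symm
  rw [Matrix.det_fin_two_of, heval₂, heval₂]
  have hkey : (A n).eval z * h (n-1) z - (A (n-1)).eval z * h n z =
      (1 / (2 * Real.pi * I)) * (0 - ((c (n-1))^2 : ℝ)) := by
    have step1 : (A n).eval z * h (n-1) z - (A (n-1)).eval z * h n z =
        (1 / (2 * Real.pi * I)) *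
          ((∫ x : ℝ, (A n).eval z * ((A (n-1)).eval (x : ℂ) / ((x : ℂ) - z)) ∂μ) -
           (∫ x : ℝ, (A (n-1)).eval z * ((A n).eval (x : ℂ) / ((x : ℂ) - z)) ∂μ)) := by
      rw [hh n, hh (n-1), integral_const_mul, integral_const_mul]
      ring
    rw [step1, ← integral_sub ((hfk (n-1)).const_mul _) ((hfk n).const_mul _)]
    congr 1
    rw [show (fun x : ℝ => (A n).eval z * ((A (n-1)).eval (x : ℂ) / ((x : ℂ) - z)) -
        (A (n-1)).eval z * ((A n).eval (x : ℂ) / ((x : ℂ) - z))) =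
        fun x : ℝ => (A n).eval (x : ℂ) * q0.eval (x : ℂ) -
          (A (n-1)).eval (x : ℂ) * q1.eval (x : ℂ) from funext hpt]
    rw [integral_sub (by simpa [Polynomial.eval_mul] using intC μ hmom (A n * q0))
      (by simpa [Polynomial.eval_mul] using intC μ hmom (A (n-1) * q1)), I1, I2]
  have : (A n).eval z * (-2 * Real.pi * I / (c (n-1))^2 * h (n-1) z) -
      h n z * (-2 * Real.pi * I / (c (n-1))^2 * (A (n-1)).eval z) =
      (-2 * Real.pi * I / (c (n-1))^2) *
        ((A n).eval z * h (n-1) z - (A (n-1)).eval z * h n z) := by ring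
  rw [this, hkey]
  field_simp
  push_cast
  ring
end

section
/- For a partition λ = (λ_1 ≥ ... ≥ λ_N ≥ 0) and distinct variables x_1,...,x_N, the Schur polynomial satisfies s_λ(x_1,...,x_N) = det[x_i^{λ_j - j + N}]_{1≤i,j≤N} / Δ(x_1,...,x_N), where Δ(x_1,...,x_N) = ∏_{i<j}(x_j - x_i) is the Vandermonde determinant. -/
open Finset

/-- The complete homogeneous symmetric polynomial `h_k` evaluated at `x`,
extended by `0` to negative indices. -/
noncomputable def completeHomog (N : ℕ) (x : Fin N → ℝ) : ℤ → ℝ := fun k =>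
  if 0 ≤ k then MvPolynomial.eval x (MvPolynomial.hsymm (Fin N) ℝ k.toNat) else 0

/-- The Schur polynomial of the partition `lam`, defined by the Jacobi–Trudi
formula `s_lam = det[h_{lam_i - i + j}]`. -/
noncomputable def schurJT (N : ℕ) (lam : Fin N → ℕ) (x : Fin N → ℝ) : ℝ :=
  Matrix.det (Matrix.of fun i j : Fin N =>
    completeHomog N x ((lam i : ℤ) + (j : ℕ) - (i : ℕ)))

open Finset Polynomial

namespace SchurAux

variable {N : ℕ} (x : Fin N → ℝ)

noncomputable def hh (s : Finset (Fin N)) (n : ℕ) : ℝ :=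
  ∑ m ∈ s.sym n, ((m : Multiset (Fin N)).map x).prod

noncomputable def EP (s : Finset (Fin N)) : Polynomial ℝ :=
  ∏ j ∈ s, (1 - Polynomial.C (x j) * Polynomial.X)

lemma hh_zero (s : Finset (Fin N)) : hh x s 0 = 1 := by
  simp only [hh, Finset.sym_zero, Finset.sum_singleton]
  rfl

lemma hh_empty_succ (n : ℕ) : hh x (∅ : Finset (Fin N)) (n + 1) = 0 := by
  simp [hh, Finset.sym_empty]

lemma hh_cons (a : Fin N) (s : Finset (Fin N)) (ha : a ∉ s) (n : ℕ) :
    hh x (Finset.cons a s ha) (n + 1) =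
      hh x s (n + 1) + x a * hh x (Finset.cons a s ha) n := by
  classical
  unfold hh
  have hdecomp : (Finset.cons a s ha).sym (n + 1) =
      ((Finset.cons a s ha).sym n).image (Sym.cons a) ∪ s.sym (n + 1) := by
    ext m
    simp only [Finset.mem_union, Finset.mem_image, Finset.mem_sym_iff, Finset.mem_cons]
    constructor
    · intro hm
      by_cases hcase : a ∈ m
      · left
        refine ⟨Sym.erase m a hcase, ?_, Sym.cons_erase hcase⟩
        intro b hb
        have hb' : b ∈ m := Multiset.mem_of_mem_erase hb
        exact hm b hb'
      · right
        intro b hb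
        rcases hm b hb with h | h
        · exact absurd (h ▸ hb) hcase
        · exact h
    · rintro (⟨m', hm', rfl⟩ | hm)
      · intro b hb
        rcases Sym.mem_cons.mp hb with h | h
        · exact Or.inl h
        · exact hm' b h
      · intro b hb
        exact Or.inr (hm b hb)
  have hdisj : Disjoint (((Finset.cons a s ha).sym n).image (Sym.cons a)) (s.sym (n + 1)) := by
    rw [Finset.disjoint_left]
    rintro m hm hm'
    rcases Finset.mem_image.mp hm with ⟨m', _, rfl⟩
    exact ha (Finset.mem_sym_iff.mp hm' a (Sym.mem_cons_self a m'))
  have hinj : ∀ m1 ∈ (Finset.cons a s ha).sym n, ∀ m2 ∈ (Finset.cons a s ha).sym n,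
      a ::ₛ m1 = a ::ₛ m2 → m1 = m2 := fun m1 _ m2 _ h => (Sym.cons_inj_right a m1 m2).mp h
  rw [hdecomp, Finset.sum_union hdisj, Finset.sum_image hinj, Finset.mul_sum]
  rw [add_comm]
  congr 1
  refine Finset.sum_congr rfl fun m _ => ?_
  rw [Sym.coe_cons, Multiset.map_cons, Multiset.prod_cons]

open PowerSeries in
lemma step_ps (a : Fin N) (s : Finset (Fin N)) (ha : a ∉ s) :
    (1 - PowerSeries.C (x a) * PowerSeries.X) *
      PowerSeries.mk (hh x (Finset.cons a s ha)) = PowerSeries.mk (hh x s) := by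
  ext n
  rw [sub_mul, one_mul, map_sub, mul_assoc]
  cases n with
  | zero =>
      simp [PowerSeries.coeff_zero_eq_constantCoeff, hh_zero]
  | succ n =>
      rw [PowerSeries.coeff_C_mul, PowerSeries.coeff_succ_X_mul, PowerSeries.coeff_mk,
        PowerSeries.coeff_mk, PowerSeries.coeff_mk, hh_cons]
      ring

lemma key_ps (s : Finset (Fin N)) :
    ((EP x s : Polynomial ℝ) : PowerSeries ℝ) * PowerSeries.mk (hh x s) = 1 := by
  classical
  induction s using Finset.cons_induction with
  | empty =>
      have h1 : (EP x (∅ : Finset (Fin N))) = 1 := Finset.prod_empty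
      have h2 : PowerSeries.mk (hh x (∅ : Finset (Fin N))) = 1 := by
        ext n
        cases n with
        | zero => simp [hh_zero]
        | succ n => simp [hh_empty_succ]
      rw [h1, h2, Polynomial.coe_one, one_mul]
  | cons a s ha ih =>
      have h1 : (EP x (Finset.cons a s ha) : PowerSeries ℝ) =
          (1 - PowerSeries.C (x a) * PowerSeries.X) * ((EP x s : Polynomial ℝ) : PowerSeries ℝ) := by
        rw [EP, Finset.prod_cons, Polynomial.coe_mul]
        congr 1
        push_cast
        ring
      rw [h1, mul_comm (1 - PowerSeries.C (x a) * PowerSeries.X), mul_assoc, step_ps, ih]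

lemma geom_ps (a : ℝ) :
    (1 - PowerSeries.C a * PowerSeries.X) * PowerSeries.mk (fun n => a ^ n) = 1 := by
  ext n
  rw [sub_mul, one_mul, map_sub, mul_assoc]
  cases n with
  | zero => simp
  | succ n =>
      rw [PowerSeries.coeff_C_mul, PowerSeries.coeff_succ_X_mul, PowerSeries.coeff_mk,
        PowerSeries.coeff_mk]
      simp [pow_succ]
      ring

lemma erase_ps (i : Fin N) :
    ((EP x (Finset.univ.erase i) : Polynomial ℝ) : PowerSeries ℝ) *
      PowerSeries.mk (hh x Finset.univ) = PowerSeries.mk (fun n => x i ^ n) := by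
  classical
  set u := (1 - PowerSeries.C (x i) * PowerSeries.X)
  have h1 : ((EP x Finset.univ : Polynomial ℝ) : PowerSeries ℝ) =
      u * ((EP x (Finset.univ.erase i) : Polynomial ℝ) : PowerSeries ℝ) := by
    rw [EP, ← Finset.mul_prod_erase Finset.univ _ (Finset.mem_univ i), Polynomial.coe_mul]
    congr 1
    push_cast
    ring
  have h2 : u * (((EP x (Finset.univ.erase i) : Polynomial ℝ) : PowerSeries ℝ) *
      PowerSeries.mk (hh x Finset.univ)) = 1 := by
    rw [← mul_assoc, ← h1, key_ps]
  have h3 : u * PowerSeries.mk (fun n => x i ^ n) = 1 := geom_ps (x i)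
  calc ((EP x (Finset.univ.erase i) : Polynomial ℝ) : PowerSeries ℝ) *
        PowerSeries.mk (hh x Finset.univ)
      = (u * PowerSeries.mk (fun n => x i ^ n)) *
          (((EP x (Finset.univ.erase i) : Polynomial ℝ) : PowerSeries ℝ) *
            PowerSeries.mk (hh x Finset.univ)) := by rw [h3, one_mul]
    _ = PowerSeries.mk (fun n => x i ^ n) *
          (u * (((EP x (Finset.univ.erase i) : Polynomial ℝ) : PowerSeries ℝ) *
            PowerSeries.mk (hh x Finset.univ))) := by ring
    _ = PowerSeries.mk (fun n => x i ^ n) := by rw [h2, mul_one]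

lemma hh_univ (n : ℕ) :
    hh x Finset.univ n = MvPolynomial.eval x (MvPolynomial.hsymm (Fin N) ℝ n) := by
  classical
  rw [hh, Finset.sym_univ, MvPolynomial.hsymm, map_sum]
  refine Finset.sum_congr rfl fun m _ => ?_
  rw [map_multiset_prod, Multiset.map_map]
  congr 1
  refine Multiset.map_congr rfl fun b _ => ?_
  simp

lemma natDegree_EP (s : Finset (Fin N)) : (EP x s).natDegree ≤ s.card := by
  refine le_trans (Polynomial.natDegree_prod_le _ _) ?_
  rw [Finset.card_eq_sum_ones s]
  refine Finset.sum_le_sum fun j _ => ?_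
  refine le_trans (Polynomial.natDegree_sub_le _ _) ?_
  simp only [Polynomial.natDegree_one, max_le_iff]
  constructor
  · omega
  · calc (Polynomial.C (x j) * Polynomial.X).natDegree ≤ _ := Polynomial.natDegree_mul_le
      _ ≤ 1 := by simp

lemma completeHomog_of_le {m k : ℕ} (hk : k ≤ m) :
    completeHomog N x ((m : ℤ) - (k : ℤ)) = hh x Finset.univ (m - k) := by
  rw [completeHomog, if_pos (by omega)]
  have ht : ((m : ℤ) - (k : ℤ)).toNat = m - k := by omega
  rw [ht, hh_univ]

lemma completeHomog_of_gt {m k : ℕ} (hk : m < k) :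
    completeHomog N x ((m : ℤ) - (k : ℤ)) = 0 := by
  rw [completeHomog, if_neg (by omega)]

lemma coeff_sum_eq (i : Fin N) (m : ℕ) :
    ∑ k : Fin N, (EP x (Finset.univ.erase i)).coeff (k : ℕ) *
      completeHomog N x ((m : ℤ) - (k : ℕ)) = x i ^ m := by
  classical
  have h := congrArg (PowerSeries.coeff m) (erase_ps x i)
  rw [PowerSeries.coeff_mk, PowerSeries.coeff_mul] at h
  rw [Finset.Nat.sum_antidiagonal_eq_sum_range_succ_mk] at h
  simp only [Polynomial.coeff_coe, PowerSeries.coeff_mk] at h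
  set M := max N (m + 1) with hM
  have hcard : (Finset.univ.erase i).card < N := by
    have := Finset.card_erase_lt_of_mem (Finset.mem_univ i)
    simpa using this
  have e1 : ∑ k : Fin N, (EP x (Finset.univ.erase i)).coeff (k : ℕ) *
      completeHomog N x ((m : ℤ) - (k : ℕ)) =
      ∑ k ∈ Finset.range M, (EP x (Finset.univ.erase i)).coeff k *
        completeHomog N x ((m : ℤ) - (k : ℤ)) := by
    rw [Fin.sum_univ_eq_sum_range (fun k : ℕ => (EP x (Finset.univ.erase i)).coeff k *
        completeHomog N x ((m : ℤ) - (k : ℤ)))]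
    refine Finset.sum_subset (Finset.range_subset_range.mpr (le_max_left _ _)) ?_
    intro k _ hk
    rw [Finset.mem_range, not_lt] at hk
    have hc : (EP x (Finset.univ.erase i)).coeff k = 0 :=
      Polynomial.coeff_eq_zero_of_natDegree_lt
        (lt_of_le_of_lt (natDegree_EP x _) (lt_of_lt_of_le hcard hk))
    simp only [hc, zero_mul]
  have e2 : ∑ k ∈ Finset.range (m + 1),
      (EP x (Finset.univ.erase i)).coeff k * hh x Finset.univ (m - k) =
      ∑ k ∈ Finset.range M, (EP x (Finset.univ.erase i)).coeff k *
        completeHomog N x ((m : ℤ) - (k : ℤ)) := by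
    have e3 : ∑ k ∈ Finset.range (m + 1),
        (EP x (Finset.univ.erase i)).coeff k * hh x Finset.univ (m - k) =
        ∑ k ∈ Finset.range (m + 1), (EP x (Finset.univ.erase i)).coeff k *
          completeHomog N x ((m : ℤ) - (k : ℤ)) :=
      Finset.sum_congr rfl fun k hk => by
        rw [completeHomog_of_le x (Nat.lt_succ_iff.mp (Finset.mem_range.mp hk))]
    rw [e3]
    refine Finset.sum_subset (Finset.range_subset_range.mpr (le_max_right _ _)) ?_
    intro k _ hk
    rw [Finset.mem_range, not_lt] at hk
    rw [completeHomog_of_gt x (by omega), mul_zero]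
  rw [e1, ← e2, h]

lemma reflect_EP (s : Finset (Fin N)) :
    (EP x s).reflect s.card = ∏ j ∈ s, (Polynomial.X - Polynomial.C (x j)) := by
  classical
  induction s using Finset.cons_induction with
  | empty => simp [EP, Polynomial.reflect_one]
  | cons a s ha ih =>
      have h1 : EP x (Finset.cons a s ha) = (1 - Polynomial.C (x a) * Polynomial.X) * EP x s := by
        rw [EP, Finset.prod_cons]; rfl
      have hd1 : (1 - Polynomial.C (x a) * Polynomial.X : Polynomial ℝ).natDegree ≤ 1 := by
        refine le_trans (Polynomial.natDegree_sub_le _ _) ?_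
        simp only [Polynomial.natDegree_one, max_le_iff]
        refine ⟨by omega, ?_⟩
        calc (Polynomial.C (x a) * Polynomial.X).natDegree ≤ _ := Polynomial.natDegree_mul_le
          _ ≤ 1 := by simp
      have hr1 : (1 - Polynomial.C (x a) * Polynomial.X : Polynomial ℝ).reflect 1 =
          Polynomial.X - Polynomial.C (x a) := by
        have : (1 - Polynomial.C (x a) * Polynomial.X : Polynomial ℝ) =
            Polynomial.C (-(x a)) * Polynomial.X ^ 1 + 1 := by
          rw [map_neg]
          ring
        rw [this, Polynomial.reflect_add, Polynomial.reflect_C_mul_X_pow,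
          Polynomial.reflect_one]
        rw [Polynomial.revAt_le (le_refl 1)]
        rw [map_neg]
        ring
      rw [h1, Finset.card_cons, Finset.prod_cons]
      rw [show s.card + 1 = 1 + s.card from by omega,
        Polynomial.reflect_mul _ _ hd1 (natDegree_EP x s), hr1, ih]

lemma sum_coeff_pow (s : Finset (Fin N)) (y : ℝ) :
    ∑ k ∈ Finset.range (s.card + 1), (EP x s).coeff k * y ^ (s.card - k) =
      ∏ j ∈ s, (y - x j) := by
  classical
  have hd : (∏ j ∈ s, (Polynomial.X - Polynomial.C (x j))).natDegree < s.card + 1 := by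
    refine Nat.lt_succ_of_le (le_trans (Polynomial.natDegree_prod_le _ _) ?_)
    rw [Finset.card_eq_sum_ones s]
    exact Finset.sum_le_sum fun j _ => by
      simpa using Polynomial.natDegree_X_sub_C_le (x j)
  have heval : Polynomial.eval y (∏ j ∈ s, (Polynomial.X - Polynomial.C (x j))) =
      ∏ j ∈ s, (y - x j) := by
    rw [Polynomial.eval_prod]
    exact Finset.prod_congr rfl fun j _ => by simp
  rw [← heval, Polynomial.eval_eq_sum_range' hd, ← reflect_EP]
  rw [← Finset.sum_range_reflect]
  refine Finset.sum_congr rfl fun k hk => ?_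
  rw [Finset.mem_range] at hk
  rw [Polynomial.coeff_reflect, Polynomial.revAt_le (show k ≤ s.card by omega)]
  have h2 : s.card + 1 - 1 - k = s.card - k := by omega
  have h1 : s.card - (s.card - k) = k := by omega
  rw [h2, h1]

lemma prod_erase_split (f : Fin N → ℝ) (i : Fin N) :
    ∏ j ∈ Finset.univ.erase i, f j =
      (∏ j ∈ Finset.Ioi i, f j) * ∏ j ∈ Finset.Iio i, f j := by
  have hd : Disjoint (Finset.Ioi i) (Finset.Iio i) := by
    rw [Finset.disjoint_left]
    intro j hj hj'
    rw [Finset.mem_Ioi] at hj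
    rw [Finset.mem_Iio] at hj'
    exact absurd (hj.trans hj') (lt_irrefl i)
  have he : Finset.univ.erase i = Finset.Ioi i ∪ Finset.Iio i := by
    ext j
    simp only [Finset.mem_erase, Finset.mem_univ, and_true, Finset.mem_union, Finset.mem_Ioi,
      Finset.mem_Iio]
    constructor
    · intro h
      rcases lt_or_gt_of_ne h with h' | h'
      · exact Or.inr h'
      · exact Or.inl h'
    · rintro (h | h)
      · exact ne_of_gt h
      · exact ne_of_lt h
  rw [he, Finset.prod_union hd]

lemma prod_swap_Iio (f : Fin N → Fin N → ℝ) :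
    ∏ i : Fin N, ∏ j ∈ Finset.Iio i, f i j = ∏ i : Fin N, ∏ j ∈ Finset.Ioi i, f j i := by
  rw [Finset.prod_sigma', Finset.prod_sigma']
  refine Finset.prod_nbij' (fun p => ⟨p.2, p.1⟩) (fun p => ⟨p.2, p.1⟩) ?_ ?_ ?_ ?_ ?_
  · rintro ⟨i, j⟩ hp
    simp only [Finset.mem_sigma, Finset.mem_univ, Finset.mem_Iio, true_and] at hp
    simp only [Finset.mem_sigma, Finset.mem_univ, Finset.mem_Ioi, true_and]
    exact hp
  · rintro ⟨i, j⟩ hp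
    simp only [Finset.mem_sigma, Finset.mem_univ, Finset.mem_Ioi, true_and] at hp
    simp only [Finset.mem_sigma, Finset.mem_univ, Finset.mem_Iio, true_and]
    exact hp
  · rintro ⟨i, j⟩ _; rfl
  · rintro ⟨i, j⟩ _; rfl
  · rintro ⟨i, j⟩ _; rfl

lemma rev_val_add (k : Fin N) : ((Fin.rev k : Fin N) : ℕ) + (k : ℕ) + 1 = N := by
  have hk : (k : ℕ) < N := k.isLt
  have : ((Fin.rev k : Fin N) : ℕ) = N - ((k : ℕ) + 1) := rfl
  omega

lemma sign_rev_eq :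
    (((Equiv.Perm.sign (Fin.revPerm : Equiv.Perm (Fin N))) : ℤ) : ℝ) =
      ∏ i : Fin N, ∏ j ∈ Finset.Ioi i, (-1 : ℝ) := by
  classical
  set v : Fin N → ℝ := fun i => ((i : ℕ) : ℝ) with hv
  have hδ := Matrix.det_permute (Fin.revPerm : Equiv.Perm (Fin N)) (Matrix.vandermonde v)
  have h1 : (Matrix.vandermonde v).submatrix (Fin.revPerm : Equiv.Perm (Fin N)) id =
      Matrix.vandermonde (fun i => v (Fin.rev i)) := by
    ext i j
    rfl
  rw [h1, Matrix.det_vandermonde, Matrix.det_vandermonde] at hδ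
  have h2 : ∀ i : Fin N, ∀ j ∈ Finset.Ioi i,
      v (Fin.rev j) - v (Fin.rev i) = (-1) * (v j - v i) := by
    intro i j _
    have hi := rev_val_add i
    have hj := rev_val_add j
    have hi' := congrArg (fun t : ℕ => (t : ℝ)) hi
    have hj' := congrArg (fun t : ℕ => (t : ℝ)) hj
    push_cast at hi' hj'
    simp only [hv]
    linarith
  rw [Finset.prod_congr rfl (fun i _ => Finset.prod_congr rfl (h2 i))] at hδ
  rw [Finset.prod_congr rfl
    (fun i (_ : i ∈ Finset.univ) => Finset.prod_mul_distrib (s := Finset.Ioi i)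
      (f := fun _ => (-1 : ℝ)) (g := fun j => v j - v i)), Finset.prod_mul_distrib] at hδ
  have hP : (∏ i : Fin N, ∏ j ∈ Finset.Ioi i, (v j - v i)) ≠ 0 := by
    refine Finset.prod_ne_zero_iff.mpr fun i _ => Finset.prod_ne_zero_iff.mpr fun j hj => ?_
    have hij : i < j := Finset.mem_Ioi.mp hj
    have : v i < v j := by
      simp only [hv]
      exact_mod_cast hij
    linarith
  exact (mul_right_cancel₀ hP hδ).symm

theorem main (lam : Fin N → ℕ) (hx : Function.Injective x) :
    Matrix.det (Matrix.of fun i j : Fin N =>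
        completeHomog N x ((lam i : ℤ) + (j : ℕ) - (i : ℕ))) =
      Matrix.det (Matrix.of fun i j : Fin N => x i ^ (lam (Fin.rev j) + (j : ℕ))) /
        (∏ i : Fin N, ∏ j ∈ Finset.Ioi i, (x j - x i)) := by
  classical
  set Δ : ℝ := ∏ i : Fin N, ∏ j ∈ Finset.Ioi i, (x j - x i) with hΔdef
  set δ : ℝ := ∏ i : Fin N, ∏ j ∈ Finset.Ioi i, (-1 : ℝ) with hδdef
  have hΔ : Δ ≠ 0 := by
    refine Finset.prod_ne_zero_iff.mpr fun i _ => Finset.prod_ne_zero_iff.mpr fun j hj => ?_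
    have hij : i < j := Finset.mem_Ioi.mp hj
    exact sub_ne_zero.mpr fun h => (ne_of_gt hij) (hx h)
  set A : Matrix (Fin N) (Fin N) ℝ :=
    Matrix.of (fun i k : Fin N => (EP x (Finset.univ.erase i)).coeff ((Fin.rev k : Fin N) : ℕ))
    with hA
  set Hm : Matrix (Fin N) (Fin N) ℝ :=
    Matrix.of (fun k j : Fin N => completeHomog N x
      ((lam (Fin.rev j) : ℤ) + (j : ℕ) - ((Fin.rev k : Fin N) : ℕ))) with hHm
  set G : Matrix (Fin N) (Fin N) ℝ :=
    Matrix.of (fun i j : Fin N => x i ^ (lam (Fin.rev j) + (j : ℕ))) with hG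
  set JT : Matrix (Fin N) (Fin N) ℝ :=
    Matrix.of (fun i j : Fin N => completeHomog N x ((lam i : ℤ) + (j : ℕ) - (i : ℕ))) with hJT
  -- Step 1 : G = A * Hm
  have step1 : G = A * Hm := by
    ext i j
    rw [Matrix.mul_apply]
    have hre : ∑ k : Fin N, A i k * Hm k j =
        ∑ k : Fin N, A i (Fin.rev k) * Hm (Fin.rev k) j :=
      (Fintype.sum_bijective Fin.rev Fin.rev_bijective _ _ (fun k => rfl)).symm
    rw [hre]
    have hterm : ∀ k : Fin N, A i (Fin.rev k) * Hm (Fin.rev k) j =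
        (EP x (Finset.univ.erase i)).coeff (k : ℕ) *
          completeHomog N x (((lam (Fin.rev j) + (j : ℕ) : ℕ) : ℤ) - (k : ℕ)) := by
      intro k
      simp only [hA, hHm, Matrix.of_apply, Fin.rev_rev]
      norm_cast
    rw [Finset.sum_congr rfl fun k _ => hterm k, coeff_sum_eq]
    rfl
  -- Step 2 : det Hm = sign(rev) * schurJT
  have step2 : Hm.det = (((Equiv.Perm.sign (Fin.revPerm : Equiv.Perm (Fin N))) : ℤ) : ℝ) *
      JT.det := by
    have hsub : Hm = (JT.transpose).submatrix id (Fin.revPerm : Equiv.Perm (Fin N)) := by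
      ext k j
      simp only [hHm, hJT, Matrix.submatrix_apply, Matrix.transpose_apply, Matrix.of_apply,
        id_eq, Fin.revPerm_apply]
      congr 1
      have h1 := rev_val_add k
      have h2 := rev_val_add j
      omega
    rw [hsub, Matrix.det_permute', Matrix.det_transpose]
  -- Step 3 : A * V' = D
  have hcard : ∀ i : Fin N, (Finset.univ.erase i).card = N - 1 := fun i => by
    rw [Finset.card_erase_of_mem (Finset.mem_univ i), Finset.card_univ, Fintype.card_fin]
  have step3 : A * (Matrix.vandermonde x).transpose =
      Matrix.diagonal (fun i => ∏ j ∈ Finset.univ.erase i, (x i - x j)) := by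
    ext i l
    rw [Matrix.mul_apply]
    have hre : ∑ k : Fin N, A i k * (Matrix.vandermonde x).transpose k l =
        ∑ k : Fin N, A i (Fin.rev k) * (Matrix.vandermonde x).transpose (Fin.rev k) l :=
      (Fintype.sum_bijective Fin.rev Fin.rev_bijective _ _ (fun k => rfl)).symm
    have hterm : ∀ k : Fin N, A i (Fin.rev k) * (Matrix.vandermonde x).transpose (Fin.rev k) l =
        (EP x (Finset.univ.erase i)).coeff (k : ℕ) *
          (x l) ^ ((Finset.univ.erase i).card - (k : ℕ)) := by
      intro k
      simp only [hA, Matrix.of_apply, Fin.rev_rev, Matrix.transpose_apply,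
        Matrix.vandermonde_apply]
      have hexp : ((Fin.rev k : Fin N) : ℕ) = (Finset.univ.erase i).card - (k : ℕ) := by
        have h1 := rev_val_add k
        have h2 := hcard i
        omega
      rw [hexp]
    rw [hre, Finset.sum_congr rfl fun k _ => hterm k]
    have hsum : ∑ k : Fin N, (EP x (Finset.univ.erase i)).coeff (k : ℕ) *
        (x l) ^ ((Finset.univ.erase i).card - (k : ℕ)) =
        ∏ j ∈ Finset.univ.erase i, (x l - x j) := by
      rw [Fin.sum_univ_eq_sum_range (fun k : ℕ => (EP x (Finset.univ.erase i)).coeff k *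
        (x l) ^ ((Finset.univ.erase i).card - k))]
      have hs := sum_coeff_pow x (Finset.univ.erase i) (x l)
      rw [show (Finset.univ.erase i).card + 1 = N from by
        have := i.pos
        rw [hcard i]
        omega] at hs
      exact hs
    rw [hsum]
    by_cases hil : i = l
    · subst hil
      rw [Matrix.diagonal_apply_eq]
    · rw [Matrix.diagonal_apply_ne _ hil]
      refine Finset.prod_eq_zero
        (Finset.mem_erase.mpr ⟨fun h => hil h.symm, Finset.mem_univ l⟩) (sub_self (x l))
  -- determinants
  have dV : ((Matrix.vandermonde x).transpose).det = Δ := by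
    rw [Matrix.det_transpose, Matrix.det_vandermonde]
  have dD : (Matrix.diagonal (fun i => ∏ j ∈ Finset.univ.erase i, (x i - x j))).det
      = δ * Δ * Δ := by
    rw [Matrix.det_diagonal]
    calc ∏ i : Fin N, ∏ j ∈ Finset.univ.erase i, (x i - x j)
        = ∏ i : Fin N, ((∏ j ∈ Finset.Ioi i, (x i - x j)) * ∏ j ∈ Finset.Iio i, (x i - x j)) :=
          Finset.prod_congr rfl fun i _ => prod_erase_split (fun j => x i - x j) i
      _ = (∏ i : Fin N, ∏ j ∈ Finset.Ioi i, (x i - x j)) *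
            ∏ i : Fin N, ∏ j ∈ Finset.Iio i, (x i - x j) := Finset.prod_mul_distrib
      _ = (∏ i : Fin N, ∏ j ∈ Finset.Ioi i, (x i - x j)) * Δ := by
          rw [prod_swap_Iio (fun i j => x i - x j)]
      _ = (∏ i : Fin N, ∏ j ∈ Finset.Ioi i, ((-1 : ℝ) * (x j - x i))) * Δ := by
          rw [Finset.prod_congr rfl fun i _ => Finset.prod_congr rfl
            (fun j _ => by ring : ∀ j ∈ Finset.Ioi i, x i - x j = (-1 : ℝ) * (x j - x i))]
      _ = δ * Δ * Δ := by
          rw [Finset.prod_congr rfl fun i (_ : i ∈ Finset.univ) =>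
            Finset.prod_mul_distrib (s := Finset.Ioi i) (f := fun _ => (-1 : ℝ))
              (g := fun j => x j - x i), Finset.prod_mul_distrib]
  have detA : A.det = δ * Δ := by
    have h := congrArg Matrix.det step3
    rw [Matrix.det_mul, dV, dD] at h
    exact mul_right_cancel₀ hΔ h
  have hδδ : δ * δ = 1 := by
    rw [hδdef, ← Finset.prod_mul_distrib]
    refine Finset.prod_eq_one fun i _ => ?_
    rw [← Finset.prod_mul_distrib]
    exact Finset.prod_eq_one fun j _ => by norm_num
  have hsign : (((Equiv.Perm.sign (Fin.revPerm : Equiv.Perm (Fin N))) : ℤ) : ℝ) = δ :=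
    sign_rev_eq
  rw [eq_div_iff hΔ]
  have detG : G.det = A.det * Hm.det := by rw [step1, Matrix.det_mul]
  rw [detG, detA, step2, hsign]
  rw [show δ * Δ * (δ * JT.det) = (δ * δ) * (JT.det * Δ) from by ring, hδδ, one_mul]

end SchurAux

/-- Bialternant formula: for a partition `lam_1 ≥ ... ≥ lam_N ≥ 0` and distinct
variables, `s_lam(x) = det[x_i^{lam_j - j + N}] / Δ(x)`, where
`Δ(x) = ∏_{i<j}(x_j - x_i)` is the Vandermonde determinant (the generalized
Vandermonde determinant in the numerator is written with its columns in the
reversed order matching the Vandermonde `det[x_i^{j-1}]` convention). -/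
theorem schur_bialternant_formula (N : ℕ) (lam : Fin N → ℕ) (hlam : Antitone lam)
    (x : Fin N → ℝ) (hx : Function.Injective x) :
    schurJT N lam x =
      Matrix.det (Matrix.of fun i j : Fin N => x i ^ (lam (Fin.rev j) + (j : ℕ))) /
        (∏ i : Fin N, ∏ j ∈ Finset.Ioi i, (x j - x i)) := by
  exact SchurAux.main x lam hx
end

section
/- Let μ be a finite positive measure on ℝ with all moments finite, π_{N-1} the (N-1)-st monic orthogonal polynomial with norm c_{N-1}, γ_{N-1} = -2πi/c_{N-1}², and h_{N-1} its Cauchy transform. Then for ε ∈ ℂ \ ℝ, γ_{N-1} h_{N-1}(ε) = Z_N^{-1} ∫_{ℝ^N} ∏_{j=1}^N (ε - x_j)^{-1} · Δ²(x_1,...,x_N) ∏_j dμ(x_j), where Z_N = ∫_{ℝ^N} Δ²(x) ∏ dμ(x_j). In other words, the ensemble average of 1/det(ε - H) equals γ_{N-1} h_{N-1}(ε). -/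
open MeasureTheory Polynomial Complex Finset

/-- Vandermonde product `Δ(x_1,...,x_n) = ∏_{i<j} (x_j - x_i)` of real numbers. -/
def vdmR {n : ℕ} (x : Fin n → ℝ) : ℝ :=
  ∏ i : Fin n, ∏ j ∈ Finset.Ioi i, (x j - x i)

open Matrix


noncomputable def Gpoly (ε : ℂ) (n : ℕ) (y : ℕ → ℂ) : Polynomial ℂ :=
  ∑ m ∈ range (n+1), (∏ k ∈ range m, (X - C (y k))) * C (∏ k ∈ Finset.Ico (m+1) (n+1), (ε - y k))

lemma Gpoly_eval (ε : ℂ) (n : ℕ) (y : ℕ → ℂ) (t : ℂ) :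
    (Gpoly ε n y).eval t
      = ∑ m ∈ range (n+1), (∏ k ∈ range m, (t - y k)) *
          (∏ k ∈ Finset.Ico (m+1) (n+1), (ε - y k)) := by
  simp [Gpoly, eval_finset_sum, eval_prod]

lemma telescope (ε t : ℂ) (M : ℕ) (y : ℕ → ℂ) :
    (ε - t) * ∑ m ∈ range M, (∏ k ∈ range m, (t - y k)) * (∏ k ∈ Finset.Ico (m+1) M, (ε - y k))
      = ∏ k ∈ range M, (ε - y k) - ∏ k ∈ range M, (t - y k) := by
  induction M with
  | zero => simp
  | succ M ih =>
    rw [Finset.sum_range_succ]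
    have h1 : ∀ m ∈ range M, (∏ k ∈ range m, (t - y k)) * (∏ k ∈ Finset.Ico (m+1) (M+1), (ε - y k))
        = (ε - y M) * ((∏ k ∈ range m, (t - y k)) * (∏ k ∈ Finset.Ico (m+1) M, (ε - y k))) := by
      intro m hm
      rw [Finset.mem_range] at hm
      rw [Finset.prod_Ico_succ_top (by omega)]
      ring
    rw [Finset.sum_congr rfl h1, ← Finset.mul_sum]
    have h2 : Finset.Ico (M+1) (M+1) = ∅ := by simp
    rw [h2]
    simp only [Finset.prod_empty, mul_one]
    rw [Finset.prod_range_succ, Finset.prod_range_succ]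
    have h3 : (ε - t) * ((ε - y M) * ∑ m ∈ range M, (∏ k ∈ range m, (t - y k)) *
        (∏ k ∈ Finset.Ico (m+1) M, (ε - y k)) + ∏ k ∈ range M, (t - y k))
        = (ε - y M) * ((ε - t) * ∑ m ∈ range M, (∏ k ∈ range m, (t - y k)) *
        (∏ k ∈ Finset.Ico (m+1) M, (ε - y k))) + (ε - t) * ∏ k ∈ range M, (t - y k) := by ring
    rw [h3, ih]
    ring

lemma Gpoly_mul_eval (ε : ℂ) (n : ℕ) (y : ℕ → ℂ) (t : ℂ)
    (ht : ∏ k ∈ range (n+1), (t - y k) = 0) :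
    (ε - t) * (Gpoly ε n y).eval t = ∏ k ∈ range (n+1), (ε - y k) := by
  rw [Gpoly_eval, telescope, ht, sub_zero]

lemma Gpoly_monic (ε : ℂ) (n : ℕ) (y : ℕ → ℂ) : (Gpoly ε n y).Monic := by
  unfold Gpoly
  rw [Finset.sum_range_succ]
  have h2 : Finset.Ico (n+1) (n+1) = ∅ := by simp
  rw [h2]
  simp only [Finset.prod_empty, _root_.map_one, mul_one]
  have htop : (∏ k ∈ range n, (X - C (y k)) : Polynomial ℂ).Monic :=
    monic_prod_of_monic _ _ (fun k _ => monic_X_sub_C (y k))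
  have hdegtop : (∏ k ∈ range n, (X - C (y k)) : Polynomial ℂ).degree = n := by
    rw [degree_prod]
    simp [degree_X_sub_C]
  refine Monic.add_of_right htop ?_
  rw [hdegtop]
  apply lt_of_le_of_lt (Polynomial.degree_sum_le _ _)
  rw [Finset.sup_lt_iff (by exact WithBot.bot_lt_coe n)]
  intro m hm
  rw [Finset.mem_range] at hm
  apply lt_of_le_of_lt (Polynomial.degree_mul_le _ _)
  have hd1 : (∏ k ∈ range m, (X - C (y k)) : Polynomial ℂ).degree = m := by
    rw [degree_prod]; simp [degree_X_sub_C]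
  rw [hd1]
  have hd2 : (C (∏ k ∈ Finset.Ico (m+1) (n+1), (ε - y k))).degree ≤ 0 := degree_C_le
  calc (m : WithBot ℕ) + (C (∏ k ∈ Finset.Ico (m+1) (n+1), (ε - y k))).degree
      ≤ (m : WithBot ℕ) + 0 := add_le_add le_rfl hd2
    _ = (m : WithBot ℕ) := add_zero _
    _ < n := by exact_mod_cast hm

lemma Gpoly_natDegree (ε : ℂ) (n : ℕ) (y : ℕ → ℂ) : (Gpoly ε n y).natDegree = n := by
  have h : (Gpoly ε n y).degree = n := by
    unfold Gpoly
    rw [Finset.sum_range_succ]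
    have h2 : Finset.Ico (n+1) (n+1) = ∅ := by simp
    rw [h2]
    simp only [Finset.prod_empty, _root_.map_one, mul_one]
    have hdegtop : (∏ k ∈ range n, (X - C (y k)) : Polynomial ℂ).degree = n := by
      rw [degree_prod]; simp [degree_X_sub_C]
    rw [add_comm]
    rw [degree_add_eq_left_of_degree_lt]
    · exact hdegtop
    · rw [hdegtop]
      apply lt_of_le_of_lt (Polynomial.degree_sum_le _ _)
      rw [Finset.sup_lt_iff (by exact WithBot.bot_lt_coe n)]
      intro m hm
      rw [Finset.mem_range] at hm
      apply lt_of_le_of_lt (Polynomial.degree_mul_le _ _)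
      have hd1 : (∏ k ∈ range m, (X - C (y k)) : Polynomial ℂ).degree = m := by
        rw [degree_prod]; simp [degree_X_sub_C]
      rw [hd1]
      calc (m : WithBot ℕ) + (C (∏ k ∈ Finset.Ico (m+1) (n+1), (ε - y k))).degree
          ≤ (m : WithBot ℕ) + 0 := add_le_add le_rfl degree_C_le
        _ = (m : WithBot ℕ) := add_zero _
        _ < n := by exact_mod_cast hm
  exact natDegree_eq_of_degree_eq_some h

lemma integrable_polyEval (μ : Measure ℝ) [IsFiniteMeasure μ]
    (hmom : ∀ n : ℕ, Integrable (fun x => |x| ^ n) μ) (q : Polynomial ℝ) :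
    Integrable (fun x => q.eval x) μ := by
  have h : ∀ x : ℝ, q.eval x = ∑ i ∈ range (q.natDegree + 1), q.coeff i * x ^ i := fun x =>
    Polynomial.eval_eq_sum_range x
  simp_rw [h]
  apply integrable_finset_sum
  intro i _
  apply Integrable.const_mul
  refine (hmom i).mono' ((measurable_id.pow_const i).aestronglyMeasurable) ?_
  filter_upwards with x
  simp [_root_.abs_pow]


lemma myIntegral_prod {n : ℕ} (μ : Measure ℝ) [SigmaFinite μ] (f : Fin n → ℝ → ℂ) :
    ∫ x : Fin n → ℝ, ∏ i, f i (x i) ∂(Measure.pi fun _ => μ) = ∏ i, ∫ x, f i x ∂μ := by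
  letI : MeasureSpace ℝ := ⟨μ⟩
  exact integral_fintype_prod_eq_prod f

lemma myIntegrable_prod {n : ℕ} (μ : Measure ℝ) [SigmaFinite μ] (f : Fin n → ℝ → ℂ)
    (hf : ∀ i, Integrable (f i) μ) :
    Integrable (fun x : Fin n → ℝ => ∏ i, f i (x i)) (Measure.pi fun _ => μ) := by
  letI : MeasureSpace ℝ := ⟨μ⟩
  exact Integrable.fintype_prod hf

lemma integral_det_det (μ : Measure ℝ) [IsFiniteMeasure μ] {n : ℕ} (f g : Fin n → ℝ → ℂ)
    (hfg : ∀ a b, Integrable (fun x => f a x * g b x) μ) :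
    ∫ x : Fin n → ℝ, (Matrix.of fun i j => f i (x j)).det * (Matrix.of fun i j => g i (x j)).det
        ∂(Measure.pi fun _ => μ)
      = ∑ σ : Equiv.Perm (Fin n), ∑ τ : Equiv.Perm (Fin n),
          ((Equiv.Perm.sign σ : ℤ) : ℂ) * ((Equiv.Perm.sign τ : ℤ) : ℂ) *
            ∏ j, ∫ x, f (σ j) x * g (τ j) x ∂μ := by
  have h1 : ∀ x : Fin n → ℝ,
      (Matrix.of fun i j => f i (x j)).det * (Matrix.of fun i j => g i (x j)).det
        = ∑ σ : Equiv.Perm (Fin n), ∑ τ : Equiv.Perm (Fin n),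
            ((Equiv.Perm.sign σ : ℤ) : ℂ) * ((Equiv.Perm.sign τ : ℤ) : ℂ) *
              ∏ j, (f (σ j) (x j) * g (τ j) (x j)) := by
    intro x
    rw [Matrix.det_apply, Matrix.det_apply, Finset.sum_mul_sum]
    refine Finset.sum_congr rfl fun σ _ => Finset.sum_congr rfl fun τ _ => ?_
    simp only [Matrix.of_apply, Units.smul_def, zsmul_eq_mul, Finset.prod_mul_distrib]
    ring
  simp_rw [h1]
  rw [integral_finset_sum]
  · refine Finset.sum_congr rfl fun σ _ => ?_
    rw [integral_finset_sum]
    · refine Finset.sum_congr rfl fun τ _ => ?_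
      rw [integral_const_mul, myIntegral_prod μ (fun j => fun x => f (σ j) x * g (τ j) x)
        ]
    · intro τ _
      exact ((myIntegrable_prod μ (fun j => fun x => f (σ j) x * g (τ j) x)
        (fun j => hfg _ _))).const_mul _
  · intro σ _
    apply integrable_finset_sum
    intro τ _
    exact ((myIntegrable_prod μ (fun j => fun x => f (σ j) x * g (τ j) x)
      (fun j => hfg _ _))).const_mul _

lemma perm_sum_collapse {n : ℕ} (m : Fin (n+1) → Fin (n+1) → ℂ) (d : Fin (n+1) → ℂ)
    (hm : ∀ a b, b ≠ Fin.last n → m a b = if a = b then d b else 0) :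
    ∑ σ : Equiv.Perm (Fin (n+1)), ∑ τ : Equiv.Perm (Fin (n+1)),
        ((Equiv.Perm.sign σ : ℤ) : ℂ) * ((Equiv.Perm.sign τ : ℤ) : ℂ) *
          ∏ j, m (σ j) (τ j)
      = ((n+1).factorial : ℂ) * ∏ a, m a a := by
  have key : ∀ σ : Equiv.Perm (Fin (n+1)),
      ∑ τ : Equiv.Perm (Fin (n+1)),
        ((Equiv.Perm.sign σ : ℤ) : ℂ) * ((Equiv.Perm.sign τ : ℤ) : ℂ) * ∏ j, m (σ j) (τ j)
        = ∏ a, m a a := by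
    intro σ
    rw [Finset.sum_eq_single σ]
    · have h2 : ((Equiv.Perm.sign σ : ℤ) * (Equiv.Perm.sign σ : ℤ) : ℤ) = 1 := by
        rw [← Units.val_mul, Int.units_mul_self, Units.val_one]
      have hs : ((Equiv.Perm.sign σ : ℤ) : ℂ) * ((Equiv.Perm.sign σ : ℤ) : ℂ) = 1 := by
        rw [← Int.cast_mul, h2, Int.cast_one]
      rw [hs, one_mul]
      exact Equiv.prod_comp σ (fun a => m a a)
    · intro τ _ hτ
      have hexists : ∃ j, τ j ≠ Fin.last n ∧ σ j ≠ τ j := by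
        by_contra hcon
        push_neg at hcon
        apply hτ
        have hagree : ∀ j, τ j ≠ Fin.last n → σ j = τ j := fun j hj => hcon j hj
        have hall : ∀ j, σ j = τ j := by
          intro j
          by_cases hj : τ j = Fin.last n
          · by_cases hsj : σ j = τ j
            · exact hsj
            · exfalso
              have hj₁def : τ (τ.symm (σ j)) = σ j := τ.apply_symm_apply _
              have hne : τ.symm (σ j) ≠ j := by
                intro h
                rw [h] at hj₁def
                exact hsj hj₁def.symm
              have hτj₁ : τ (τ.symm (σ j)) ≠ Fin.last n := by
                rw [hj₁def, ← hj]
                exact hsj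
              have h3 := hagree _ hτj₁
              rw [hj₁def] at h3
              exact hne (σ.injective h3)
          · exact hagree j hj
        exact Equiv.ext fun j => (hall j).symm
      obtain ⟨j, hj1, hj2⟩ := hexists
      have hz : m (σ j) (τ j) = 0 := by rw [hm _ _ hj1, if_neg hj2]
      rw [Finset.prod_eq_zero (Finset.mem_univ j) hz, mul_zero]
    · intro h
      exact absurd (Finset.mem_univ σ) h
  rw [Finset.sum_congr rfl (fun σ _ => key σ), Finset.sum_const, Finset.card_univ,
    Fintype.card_perm, Fintype.card_fin, nsmul_eq_mul]
lemma integral_ofReal'' {X : Type*} [MeasurableSpace X] {μ : Measure X} (f : X → ℝ) :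
    ∫ x, ((f x : ℝ) : ℂ) ∂μ = ((∫ x, f x ∂μ : ℝ) : ℂ) := integral_ofReal

lemma eps_sub_ne (ε : ℂ) (hε : ε.im ≠ 0) (r : ℝ) : ε - (r : ℂ) ≠ 0 := by
  intro h
  apply hε
  have := congrArg Complex.im h
  simpa using this

lemma det_A_real {m : ℕ} (p : ℕ → Polynomial ℝ) (hmonic : ∀ k, (p k).Monic)
    (hdeg : ∀ k, (p k).natDegree = k) (x : Fin m → ℝ) :
    (Matrix.of fun i j : Fin m => (p i.val).eval (x j)).det = vdmR x := by
  rw [← Matrix.det_transpose]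
  have h : (Matrix.of fun i j : Fin m => (p i.val).eval (x j))ᵀ
      = Matrix.of fun i j : Fin m => (p j.val).eval (x i) := by
    ext i j; rfl
  rw [h, ← Matrix.det_eval_matrixOfPolynomials_eq_det_vandermonde x (fun i => p i.val)
    (fun i => hdeg i.val) (fun i => hmonic i.val), Matrix.det_vandermonde]
  rfl

lemma det_A_complex {m : ℕ} (p : ℕ → Polynomial ℝ) (hmonic : ∀ k, (p k).Monic)
    (hdeg : ∀ k, (p k).natDegree = k) (x : Fin m → ℝ) :
    (Matrix.of fun i j : Fin m => (((p i.val).eval (x j) : ℝ) : ℂ)).det = ((vdmR x : ℝ) : ℂ) := by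
  have h : (Matrix.of fun i j : Fin m => (((p i.val).eval (x j) : ℝ) : ℂ))
      = Complex.ofRealHom.mapMatrix (Matrix.of fun i j : Fin m => (p i.val).eval (x j)) := by
    ext i j; rfl
  rw [h, ← RingHom.map_det, det_A_real p hmonic hdeg x]
  rfl

lemma det_B {n : ℕ} (p : ℕ → Polynomial ℝ) (hmonic : ∀ k, (p k).Monic)
    (hdeg : ∀ k, (p k).natDegree = k) (ε : ℂ) (hε : ε.im ≠ 0) (x : Fin (n+1) → ℝ) :
    (Matrix.of fun i j : Fin (n+1) =>
        if i = Fin.last n then (ε - (x j : ℂ))⁻¹ else (((p i.val).eval (x j) : ℝ) : ℂ)).det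
      = (∏ j : Fin (n+1), (ε - (x j : ℂ)))⁻¹ * ((vdmR x : ℝ) : ℂ) := by
  set y : ℕ → ℂ := fun k => if h : k < n + 1 then ((x ⟨k, h⟩ : ℝ) : ℂ) else 0 with hy
  set P : ℂ := ∏ j : Fin (n+1), (ε - (x j : ℂ)) with hP
  have hPne : P ≠ 0 := Finset.prod_ne_zero_iff.mpr fun j _ => eps_sub_ne ε hε (x j)
  set q : Fin (n+1) → Polynomial ℂ := fun i =>
    if i = Fin.last n then Gpoly ε n y else (p i.val).map Complex.ofRealHom with hq
  set Bm : Matrix (Fin (n+1)) (Fin (n+1)) ℂ := Matrix.of fun i j =>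
    if i = Fin.last n then (ε - (x j : ℂ))⁻¹ else (((p i.val).eval (x j) : ℝ) : ℂ) with hBm
  have hPrange : ∏ k ∈ range (n+1), (ε - y k) = P := by
    rw [hP, ← Fin.prod_univ_eq_prod_range (fun k => ε - y k) (n+1)]
    apply Finset.prod_congr rfl
    intro i _
    simp [hy, i.isLt]
    intro h
    exact absurd h (not_lt.mpr (Nat.lt_succ_iff.mp i.isLt))
  have hGeval : ∀ j : Fin (n+1), (Gpoly ε n y).eval ((x j : ℝ) : ℂ) = P * (ε - (x j : ℂ))⁻¹ := by
    intro j
    have hroot : ∏ k ∈ range (n+1), (((x j : ℝ) : ℂ) - y k) = 0 := by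
      apply Finset.prod_eq_zero (Finset.mem_range.mpr j.isLt)
      simp [hy, j.isLt]
      rw [if_pos (Nat.lt_succ_iff.mp j.isLt), sub_self]
    have h1 := Gpoly_mul_eval ε n y ((x j : ℝ) : ℂ) hroot
    rw [hPrange] at h1
    have hne := eps_sub_ne ε hε (x j)
    field_simp
    rw [mul_comm]
    exact h1
  have hCdet : (Matrix.of fun i j : Fin (n+1) => (q i).eval ((x j : ℝ) : ℂ)).det
      = ((vdmR x : ℝ) : ℂ) := by
    rw [← Matrix.det_transpose]
    have h : (Matrix.of fun i j : Fin (n+1) => (q i).eval ((x j : ℝ) : ℂ))ᵀ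
        = Matrix.of fun i j : Fin (n+1) => (q j).eval (((x i : ℝ) : ℂ)) := by
      ext i j; rfl
    rw [h, ← Matrix.det_eval_matrixOfPolynomials_eq_det_vandermonde (fun i => ((x i : ℝ) : ℂ))
      q ?hdeg ?hmonic, Matrix.det_vandermonde]
    · push_cast [vdmR]
      rfl
    case hdeg =>
      intro i
      by_cases hi : i = Fin.last n
      · rw [hq]; simp only [hi, ite_true]
        rw [Gpoly_natDegree]
        simp [Fin.val_last]
      · rw [hq]; simp only [if_neg hi]
        rw [(hmonic i.val).natDegree_map, hdeg]
    case hmonic =>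
      intro i
      by_cases hi : i = Fin.last n
      · rw [hq]; simp only [hi, ite_true]; exact Gpoly_monic ε n y
      · rw [hq]; simp only [if_neg hi]; exact (hmonic i.val).map _
  have hCB : (Matrix.of fun i j : Fin (n+1) => (q i).eval ((x j : ℝ) : ℂ))
      = Bm.updateRow (Fin.last n) (P • Bm (Fin.last n)) := by
    ext i j
    by_cases hi : i = Fin.last n
    · subst hi
      rw [Matrix.updateRow_self]
      simp only [Matrix.of_apply, hq, ite_true, Pi.smul_apply, smul_eq_mul, hBm]
      rw [hGeval j]
    · rw [Matrix.updateRow_ne hi]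
      simp only [Matrix.of_apply, hq, if_neg hi, hBm]
      rw [Polynomial.eval_map]
      exact Polynomial.eval₂_at_apply ofRealHom (x j)
  have hdetC : (Matrix.of fun i j : Fin (n+1) => (q i).eval ((x j : ℝ) : ℂ)).det = P * Bm.det := by
    rw [hCB, Matrix.det_updateRow_smul, Matrix.updateRow_eq_self]
  rw [hdetC] at hCdet
  rw [← hCdet, inv_mul_cancel_left₀ hPne]

/-- The ensemble average of `1/det(ε - H)` over the `β = 2` invariant ensemble
equals `γ_{N-1} h_{N-1}(ε)`, where `h_{N-1}` is the Cauchy transform of the monic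
orthogonal polynomial `π_{N-1}` and `γ_{N-1} = -2πi/c_{N-1}²`. -/
theorem average_inverse_char_poly
    (μ : Measure ℝ) [IsFiniteMeasure μ]
    (hmom : ∀ n : ℕ, Integrable (fun x => |x| ^ n) μ)
    (p : ℕ → Polynomial ℝ) (c : ℕ → ℝ)
    (hmonic : ∀ k, (p k).Monic) (hdeg : ∀ k, (p k).natDegree = k)
    (hc : ∀ k, 0 < c k)
    (horth : ∀ k m, ∫ x, (p k).eval x * (p m).eval x ∂μ =
      if k = m then (c k) ^ 2 else 0)
    (N : ℕ) (hN : 1 ≤ N) (ε : ℂ) (hε : ε.im ≠ 0) :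
    (-2 * Real.pi * I / (c (N - 1)) ^ 2) *
        ((1 / (2 * Real.pi * I)) *
          ∫ x, (((p (N - 1)).eval x : ℝ) : ℂ) / ((x : ℂ) - ε) ∂μ) =
      (∫ x : Fin N → ℝ,
          (∏ j : Fin N, (ε - (x j : ℂ)))⁻¹ * ((vdmR x ^ 2 : ℝ) : ℂ)
            ∂(Measure.pi fun _ => μ)) /
        ((∫ x : Fin N → ℝ, vdmR x ^ 2 ∂(Measure.pi fun _ => μ) : ℝ) : ℂ) := by
  obtain ⟨n, rfl⟩ : ∃ n, N = n + 1 := ⟨N - 1, by omega⟩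
  simp only [Nat.add_sub_cancel]
  set fA : Fin (n+1) → ℝ → ℂ := fun a t => (((p a.val).eval t : ℝ) : ℂ) with hfA
  set fB : Fin (n+1) → ℝ → ℂ := fun b t =>
    if b = Fin.last n then (ε - (t : ℂ))⁻¹ else (((p b.val).eval t : ℝ) : ℂ) with hfB
  -- one-dimensional integrability facts
  have hpolyC : ∀ q : Polynomial ℝ, Integrable (fun t : ℝ => ((q.eval t : ℝ) : ℂ)) μ :=
    fun q => (integrable_polyEval μ hmom q).ofReal
  have hinv_meas : AEStronglyMeasurable (fun t : ℝ => (ε - (t : ℂ))⁻¹) μ :=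
    ((measurable_const.sub Complex.measurable_ofReal).inv).aestronglyMeasurable
  have hinv_bdd : ∀ t : ℝ, ‖(ε - (t : ℂ))⁻¹‖ ≤ |ε.im|⁻¹ := by
    intro t
    rw [norm_inv]
    have h1 : |ε.im| ≤ ‖ε - (t : ℂ)‖ := by
      have h2 := Complex.abs_im_le_norm (ε - (t : ℂ))
      simpa using h2
    have h3 : (0 : ℝ) < |ε.im| := abs_pos.mpr hε
    exact inv_anti₀ h3 h1
  have hAA : ∀ a b : Fin (n+1), Integrable (fun t => fA a t * fA b t) μ := by
    intro a b
    have h := hpolyC (p a.val * p b.val)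
    simp only [Polynomial.eval_mul, Complex.ofReal_mul] at h
    exact h
  have hAB : ∀ a b : Fin (n+1), Integrable (fun t => fA a t * fB b t) μ := by
    intro a b
    by_cases hb : b = Fin.last n
    · subst hb
      simp only [hfA, hfB, ite_true]
      have h := (hpolyC (p a.val)).bdd_mul hinv_meas (Filter.Eventually.of_forall hinv_bdd)
      simpa [mul_comm] using h
    · simp only [hfA, hfB, if_neg hb]
      exact hAA a b
  -- the matrix of one-dimensional integrals
  have hMd : ∀ a b : Fin (n+1),
      (∫ t, fA a t * fA b t ∂μ) = if a = b then ((c b.val : ℝ) : ℂ) ^ 2 else 0 := by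
    intro a b
    have h1 : (fun t => fA a t * fA b t)
        = fun t : ℝ => ((((p a.val).eval t * (p b.val).eval t : ℝ)) : ℂ) := by
      funext t; simp [hfA, Complex.ofReal_mul]
    rw [h1, integral_ofReal'' (fun t => (p a.val).eval t * (p b.val).eval t), horth]
    by_cases hab : a = b
    · subst hab; simp
    · rw [if_neg (fun h => hab (Fin.val_injective h)), if_neg hab]
      simp
  have hMoff : ∀ a b : Fin (n+1), b ≠ Fin.last n →
      (∫ t, fA a t * fB b t ∂μ) = if a = b then ((c b.val : ℝ) : ℂ) ^ 2 else 0 := by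
    intro a b hb
    have h1 : (fun t => fA a t * fB b t) = fun t => fA a t * fA b t := by
      funext t; simp [hfB, hfA, if_neg hb]
    rw [h1]
    exact hMd a b
  set hval : ℂ := ∫ t, (((p n).eval t : ℝ) : ℂ) * (ε - (t : ℂ))⁻¹ ∂μ with hhval
  have hMlast : (∫ t, fA (Fin.last n) t * fB (Fin.last n) t ∂μ) = hval := by
    simp [hfA, hfB, Fin.val_last]
    exact hhval.symm
  -- numerator
  have hnum : (∫ x : Fin (n+1) → ℝ,
        (∏ j : Fin (n+1), (ε - (x j : ℂ)))⁻¹ * ((vdmR x ^ 2 : ℝ) : ℂ)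
          ∂(Measure.pi fun _ => μ))
      = ((n+1).factorial : ℂ) * ∏ a : Fin (n+1), ∫ t, fA a t * fB a t ∂μ := by
    have hpt : (fun x : Fin (n+1) → ℝ =>
        (∏ j : Fin (n+1), (ε - (x j : ℂ)))⁻¹ * ((vdmR x ^ 2 : ℝ) : ℂ))
        = fun x => (Matrix.of fun i j => fA i (x j)).det * (Matrix.of fun i j => fB i (x j)).det := by
      funext x
      have h1 : (Matrix.of fun i j => fA i (x j)).det = ((vdmR x : ℝ) : ℂ) :=
        det_A_complex p hmonic hdeg x
      have h2 : (Matrix.of fun i j => fB i (x j)).det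
          = (∏ j : Fin (n+1), (ε - (x j : ℂ)))⁻¹ * ((vdmR x : ℝ) : ℂ) :=
        det_B p hmonic hdeg ε hε x
      rw [h1, h2]
      push_cast
      ring
    rw [hpt, integral_det_det μ fA fB hAB]
    exact perm_sum_collapse (fun a b => ∫ t, fA a t * fB b t ∂μ)
      (fun b => ((c b.val : ℝ) : ℂ) ^ 2) hMoff
  -- denominator
  have hden : ((∫ x : Fin (n+1) → ℝ, vdmR x ^ 2 ∂(Measure.pi fun _ => μ) : ℝ) : ℂ)
      = ((n+1).factorial : ℂ) * ∏ a : Fin (n+1), ((c a.val : ℝ) : ℂ) ^ 2 := by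
    rw [← integral_ofReal'' (fun x : Fin (n+1) → ℝ => vdmR x ^ 2)]
    have hpt : (fun x : Fin (n+1) → ℝ => ((vdmR x ^ 2 : ℝ) : ℂ))
        = fun x => (Matrix.of fun i j => fA i (x j)).det * (Matrix.of fun i j => fA i (x j)).det := by
      funext x
      rw [det_A_complex p hmonic hdeg x]
      push_cast
      ring
    rw [hpt, integral_det_det μ fA fA hAA]
    rw [perm_sum_collapse (fun a b => ∫ t, fA a t * fA b t ∂μ)
      (fun b => ((c b.val : ℝ) : ℂ) ^ 2) (fun a b _ => hMd a b)]
    congr 1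
    refine Finset.prod_congr rfl fun a _ => ?_
    rw [hMd a a, if_pos rfl]
  rw [hnum, hden]
  -- split the products at the last index
  have hprod1 : (∏ a : Fin (n+1), ∫ t, fA a t * fB a t ∂μ)
      = hval * ∏ a ∈ Finset.univ.erase (Fin.last n), ((c a.val : ℝ) : ℂ) ^ 2 := by
    rw [← Finset.mul_prod_erase Finset.univ _ (Finset.mem_univ (Fin.last n))]
    rw [hMlast]
    congr 1
    refine Finset.prod_congr rfl fun a ha => ?_
    rw [hMoff a a (Finset.ne_of_mem_erase ha), if_pos rfl]
  have hprod2 : (∏ a : Fin (n+1), ((c a.val : ℝ) : ℂ) ^ 2)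
      = ((c n : ℝ) : ℂ) ^ 2 * ∏ a ∈ Finset.univ.erase (Fin.last n), ((c a.val : ℝ) : ℂ) ^ 2 := by
    rw [← Finset.mul_prod_erase Finset.univ _ (Finset.mem_univ (Fin.last n))]
    simp [Fin.val_last]
  rw [hprod1, hprod2]
  -- rewrite the Cauchy integral on the left
  have hint : (∫ t : ℝ, (((p n).eval t : ℝ) : ℂ) / ((t : ℂ) - ε) ∂μ) = -hval := by
    have h1 : (fun t : ℝ => (((p n).eval t : ℝ) : ℂ) / ((t : ℂ) - ε))
        = fun t : ℝ => -((((p n).eval t : ℝ) : ℂ) * (ε - (t : ℂ))⁻¹) := by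
      funext t
      rw [div_eq_mul_inv, show ((t : ℝ) : ℂ) - ε = -(ε - (t : ℂ)) from by ring, inv_neg, mul_neg]
    rw [h1, integral_neg, hhval]
  rw [hint]
  -- final algebra
  have hQ : (∏ a ∈ Finset.univ.erase (Fin.last n), ((c a.val : ℝ) : ℂ) ^ 2) ≠ 0 :=
    Finset.prod_ne_zero_iff.mpr fun a _ =>
      pow_ne_zero _ (Complex.ofReal_ne_zero.mpr (hc a.val).ne')
  have hK : ((n+1).factorial : ℂ) ≠ 0 := Nat.cast_ne_zero.mpr (Nat.factorial_ne_zero _)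
  have hcn : ((c n : ℝ) : ℂ) ≠ 0 := Complex.ofReal_ne_zero.mpr (hc n).ne'
  have hpi : (Real.pi : ℂ) ≠ 0 := Complex.ofReal_ne_zero.mpr Real.pi_ne_zero
  field_simp
end
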